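/- Let n ≥ 2, ε = 1/(4n), and let v_1, ..., v_n be independent, where each v_i takes value 1/(2^{j_i}·ε) with probability ε and 0 otherwise, with j_i ∈ {1, ..., L}. Then E[second-max_i v_i] ≥ C(n,2)·ε²·(1-ε)^{n-2}·(1/(2^L ε)) ≥ (3/32)·(n-1)/2^L. -/

import Mathlib

open MeasureTheory ProbabilityTheory

theorem stmt12 {Ω : Type*} [MeasurableSpace Ω] (μ : Measure Ω) [IsProbabilityMeasure μ]
    (n L : ℕ) (hn : 2 ≤ n) (hL : 1 ≤ L) (ε : ℝ) (hε : ε = 1 / (4 * n))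
    (jdx : Fin n → ℕ) (hjdx : ∀ i, jdx i ∈ Finset.Icc 1 L)
    (v : Fin n → Ω → ℝ) (hmeas : ∀ i, Measurable (v i))
    (hval : ∀ i ω, v i ω = 1 / ((2:ℝ) ^ (jdx i) * ε) ∨ v i ω = 0)
    (hprob : ∀ i, μ {ω | v i ω = 1 / ((2:ℝ) ^ (jdx i) * ε)} = ENNReal.ofReal ε)
    (hindep : iIndepFun v μ)
    (hint : Integrable (fun ω => ⨆ p : {p : Fin n × Fin n // p.1 ≠ p.2},
      min (v (↑p : Fin n × Fin n).1 ω) (v (↑p : Fin n × Fin n).2 ω)) μ) :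
    (n.choose 2 : ℝ) * ε ^ 2 * (1 - ε) ^ (n - 2) * (1 / ((2:ℝ) ^ L * ε)) ≤
      (∫ ω, (⨆ p : {p : Fin n × Fin n // p.1 ≠ p.2},
        min (v (↑p : Fin n × Fin n).1 ω) (v (↑p : Fin n × Fin n).2 ω)) ∂μ) ∧
    (3 / 32) * ((n : ℝ) - 1) / 2 ^ L ≤
      (n.choose 2 : ℝ) * ε ^ 2 * (1 - ε) ^ (n - 2) * (1 / ((2:ℝ) ^ L * ε)) := by
  classical
  have hn2 : (2:ℝ) ≤ (n:ℝ) := by exact_mod_cast hn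
  have hnpos : (0:ℝ) < n := by linarith
  have hε0 : 0 < ε := by rw [hε]; positivity
  have hεn : ε * n = 1/4 := by rw [hε]; field_simp
  have hε8 : ε ≤ 1/8 := by nlinarith
  have h1ε : (0:ℝ) ≤ 1 - ε := by linarith
  set m : ℝ := 1 / ((2:ℝ)^L * ε) with hm
  have hm0 : 0 < m := by rw [hm]; positivity
  set c : Fin n → ℝ := fun i => 1 / ((2:ℝ)^(jdx i) * ε) with hc
  have hc_pos : ∀ i, 0 < c i := by intro i; simp only [hc]; positivity
  have hc_ne : ∀ i, c i ≠ 0 := fun i => ne_of_gt (hc_pos i)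
  have hcm : ∀ i, m ≤ c i := by
    intro i
    have h := Finset.mem_Icc.mp (hjdx i)
    have h2 : (2:ℝ)^(jdx i) ≤ 2^L := pow_le_pow_right₀ (by norm_num) h.2
    rw [hm, hc]
    have hd : (0:ℝ) < 2^(jdx i) * ε := by positivity
    apply one_div_le_one_div_of_le hd
    exact mul_le_mul_of_nonneg_right h2 hε0.le
  have hber : (3/4:ℝ) ≤ (1-ε)^(n-2) := by
    have h1 : (-2:ℝ) ≤ -ε := by linarith
    have h2 := one_add_mul_le_pow h1 (n-2)
    have h3 : ((n-2:ℕ):ℝ) = (n:ℝ) - 2 := by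
      have := Nat.cast_sub (R := ℝ) hn; simpa using this
    rw [h3] at h2
    have h4 : (1:ℝ) + ((n:ℝ) - 2) * (-ε) = 1 - ((n:ℝ)-2)*ε := by ring
    have h5 : (1:ℝ) + -ε = 1 - ε := by ring
    rw [h4, h5] at h2
    nlinarith
  have hval' : ∀ i ω, v i ω = c i ∨ v i ω = 0 := hval
  have hprob' : ∀ i, μ {ω | v i ω = c i} = ENNReal.ofReal ε := hprob
  have hv_nonneg : ∀ i ω, 0 ≤ v i ω := by
    intro i ω
    rcases hval' i ω with h | h
    · rw [h]; exact (hc_pos i).le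
    · rw [h]
  -- key constant and arithmetic part
  have key : (n.choose 2 : ℝ) * ε ^ 2 * m = ((n:ℝ)-1)/(8*2^L) := by
    rw [Nat.cast_choose_two, hm, hε]
    have hne : (n:ℝ) ≠ 0 := ne_of_gt hnpos
    have h2L : ((2:ℝ)^L) ≠ 0 := by positivity
    field_simp
    ring
  have part2 : (3 / 32) * ((n : ℝ) - 1) / 2 ^ L ≤
      (n.choose 2 : ℝ) * ε ^ 2 * (1 - ε) ^ (n - 2) * m := by
    have hfac : (0:ℝ) ≤ ((n:ℝ)-1)/(8*2^L) := by
      apply div_nonneg (by linarith)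
      positivity
    calc (3 / 32) * ((n : ℝ) - 1) / 2 ^ L
        = (((n:ℝ)-1)/(8*2^L)) * (3/4) := by ring
      _ ≤ (((n:ℝ)-1)/(8*2^L)) * (1-ε)^(n-2) := by
          exact mul_le_mul_of_nonneg_left hber hfac
      _ = ((n.choose 2 : ℝ) * ε ^ 2 * m) * (1-ε)^(n-2) := by rw [key]
      _ = (n.choose 2 : ℝ) * ε ^ 2 * (1 - ε) ^ (n - 2) * m := by ring
  refine ⟨?_, part2⟩
  -- Part 1: the probabilistic bound
  set X : Ω → ℝ := fun ω => ⨆ p : {p : Fin n × Fin n // p.1 ≠ p.2},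
      min (v (↑p : Fin n × Fin n).1 ω) (v (↑p : Fin n × Fin n).2 ω) with hX
  have hbdd : ∀ ω, BddAbove (Set.range fun p : {p : Fin n × Fin n // p.1 ≠ p.2} =>
      min (v (↑p : Fin n × Fin n).1 ω) (v (↑p : Fin n × Fin n).2 ω)) := by
    intro ω
    refine ⟨1/(2*ε), ?_⟩
    rintro x ⟨p, rfl⟩
    have hvle : ∀ i, v i ω ≤ 1/(2*ε) := by
      intro i
      rcases hval' i ω with h | h
      · rw [h, hc]
        have h1 : (2:ℝ) ≤ 2^(jdx i) := by
          calc (2:ℝ) = 2^1 := (pow_one 2).symm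
            _ ≤ 2^(jdx i) := pow_le_pow_right₀ one_le_two (Finset.mem_Icc.mp (hjdx i)).1
        apply one_div_le_one_div_of_le (by positivity)
        exact mul_le_mul_of_nonneg_right h1 hε0.le
      · rw [h]; positivity
    exact le_trans (min_le_left _ _) (hvle _)
  have hXnonneg : ∀ ω, 0 ≤ X ω := by
    intro ω
    apply Real.iSup_nonneg
    intro p
    exact le_min (hv_nonneg _ _) (hv_nonneg _ _)
  have hXge : ∀ ω (p : {p : Fin n × Fin n // p.1 ≠ p.2}),
      min (v (↑p : Fin n × Fin n).1 ω) (v (↑p : Fin n × Fin n).2 ω) ≤ X ω :=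
    fun ω p => le_ciSup (hbdd ω) p
  -- events
  set S : Fin n → Set Ω := fun i => {ω | v i ω = c i} with hS
  have hSmeas : ∀ i, MeasurableSet (S i) := fun i => hmeas i (measurableSet_singleton (c i))
  have hZ : ∀ i, (v i) ⁻¹' {(0:ℝ)} = (S i)ᶜ := by
    intro i
    ext ω
    simp only [hS, Set.mem_preimage, Set.mem_singleton_iff, Set.mem_compl_iff, Set.mem_setOf_eq]
    constructor
    · intro h0 h1; exact hc_ne i (h1.symm.trans h0)
    · intro h1; rcases hval' i ω with h | h
      · exact absurd h h1
      · exact h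
  have hZprob : ∀ i, μ ((S i)ᶜ) = 1 - ENNReal.ofReal ε := by
    intro i
    rw [prob_compl_eq_one_sub (hSmeas i), hprob' i]
  set F : Finset (Finset (Fin n)) := Finset.powersetCard 2 Finset.univ with hF
  have hcardF : F.card = n.choose 2 := by
    simp [hF, Finset.card_powersetCard]
  set B : Finset (Fin n) → Fin n → Set ℝ := fun s i => if i ∈ s then {c i} else {0} with hB
  have hBmeas : ∀ s i, MeasurableSet (B s i) := by
    intro s i
    simp only [hB]
    split <;> exact measurableSet_singleton _
  set A : Finset (Fin n) → Set Ω := fun s => ⋂ i, v i ⁻¹' (B s i) with hA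
  have hAmeas : ∀ s, MeasurableSet (A s) :=
    fun s => MeasurableSet.iInter fun i => hmeas i (hBmeas s i)
  have hcard2 : ∀ s ∈ F, s.card = 2 := by
    intro s hs
    exact (Finset.mem_powersetCard.mp hs).2
  -- measure of A s
  have hAmeasure : ∀ s ∈ F, μ (A s) =
      (ENNReal.ofReal ε)^2 * (1 - ENNReal.ofReal ε)^(n-2) := by
    intro s hsF
    have hcard : s.card = 2 := hcard2 s hsF
    have h1 : μ (⋂ i ∈ Finset.univ, v i ⁻¹' (B s i)) = ∏ i, μ (v i ⁻¹' (B s i)) :=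
      hindep.measure_inter_preimage_eq_mul Finset.univ (fun i _ => hBmeas s i)
    have h2 : A s = ⋂ i ∈ Finset.univ, v i ⁻¹' (B s i) := by
      simp [hA]
    rw [h2, h1]
    have h3 : ∀ i, μ (v i ⁻¹' (B s i)) =
        if i ∈ s then ENNReal.ofReal ε else 1 - ENNReal.ofReal ε := by
      intro i
      by_cases hi : i ∈ s
      · simp only [hB, if_pos hi]
        have he : v i ⁻¹' {c i} = S i := rfl
        rw [he, hprob' i]
      · simp only [hB, if_neg hi]
        rw [hZ i, hZprob i]
    calc ∏ i, μ (v i ⁻¹' (B s i))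
        = ∏ i, (if i ∈ s then ENNReal.ofReal ε else 1 - ENNReal.ofReal ε) :=
          Finset.prod_congr rfl (fun i _ => h3 i)
      _ = (∏ i ∈ s, (if i ∈ s then ENNReal.ofReal ε else 1 - ENNReal.ofReal ε)) *
          (∏ i ∈ sᶜ, (if i ∈ s then ENNReal.ofReal ε else 1 - ENNReal.ofReal ε)) :=
          (Finset.prod_mul_prod_compl s _).symm
      _ = (ENNReal.ofReal ε)^2 * (1 - ENNReal.ofReal ε)^(n-2) := by
          rw [Finset.prod_congr rfl (fun i hi => if_pos hi),
            Finset.prod_congr rfl (fun i hi => if_neg (Finset.mem_compl.mp hi)),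
            Finset.prod_const, Finset.prod_const, hcard, Finset.card_compl, hcard]
          simp
  have hAreal : ∀ s ∈ F, (μ (A s)).toReal = ε^2 * (1-ε)^(n-2) := by
    intro s hs
    rw [hAmeasure s hs]
    rw [show (1 - ENNReal.ofReal ε) = ENNReal.ofReal (1-ε) by
      rw [ENNReal.ofReal_sub _ hε0.le, ENNReal.ofReal_one]]
    rw [← ENNReal.ofReal_pow hε0.le, ← ENNReal.ofReal_pow h1ε,
      ← ENNReal.ofReal_mul (by positivity), ENNReal.toReal_ofReal
        (mul_nonneg (by positivity) (pow_nonneg h1ε _))]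
  -- disjointness
  have hdisj : ∀ s ∈ F, ∀ t ∈ F, s ≠ t → ∀ ω, ω ∈ A s → ω ∉ A t := by
    intro s hs t ht hst ω hωs hωt
    have hnsub : ¬ s ⊆ t := by
      intro hsub
      exact hst (Finset.eq_of_subset_of_card_le hsub
        (by rw [hcard2 t ht, hcard2 s hs]))
    obtain ⟨i, his, hit⟩ := Finset.not_subset.mp hnsub
    simp only [hA, Set.mem_iInter, Set.mem_preimage] at hωs hωt
    have h1 := hωs i
    have h2 := hωt i
    simp only [hB, if_pos his, if_neg hit, Set.mem_singleton_iff] at h1 h2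
    exact hc_ne i (h1.symm.trans h2)
  -- pointwise bound
  have hpoint : ∀ ω, (∑ s ∈ F, (A s).indicator (fun _ => m) ω) ≤ X ω := by
    intro ω
    by_cases hω : ∃ s ∈ F, ω ∈ A s
    · obtain ⟨s, hsF, hωs⟩ := hω
      have hsum : ∑ t ∈ F, (A t).indicator (fun _ => m) ω = m := by
        rw [Finset.sum_eq_single s]
        · exact Set.indicator_of_mem hωs _
        · intro t htF hts
          exact Set.indicator_of_notMem (hdisj s hsF t htF (Ne.symm hts) ω hωs) _
        · intro h; exact absurd hsF h
      rw [hsum]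
      obtain ⟨p, q, hpq, hs2⟩ := Finset.card_eq_two.mp (hcard2 s hsF)
      have hmem : ∀ i ∈ s, v i ω = c i := by
        intro i hi
        have h1 : ω ∈ v i ⁻¹' (B s i) := by
          simp only [hA, Set.mem_iInter] at hωs
          exact hωs i
        simp only [hB, if_pos hi, Set.mem_preimage, Set.mem_singleton_iff] at h1
        exact h1
      have hp : p ∈ s := by rw [hs2]; exact Finset.mem_insert_self _ _
      have hq : q ∈ s := by rw [hs2]; exact Finset.mem_insert_of_mem (Finset.mem_singleton_self _)
      calc m ≤ min (c p) (c q) := le_min (hcm p) (hcm q)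
        _ = min (v p ω) (v q ω) := by rw [hmem p hp, hmem q hq]
        _ ≤ X ω := hXge ω ⟨(p, q), hpq⟩
    · push_neg at hω
      have hsum : ∑ t ∈ F, (A t).indicator (fun _ => m) ω = 0 :=
        Finset.sum_eq_zero (fun t ht => Set.indicator_of_notMem (hω t ht) _)
      rw [hsum]
      exact hXnonneg ω
  -- integrate
  have hintind : ∀ s ∈ F, Integrable ((A s).indicator (fun _ => m)) μ :=
    fun s _ => (integrable_const m).indicator (hAmeas s)
  have hintsum : Integrable (fun ω => ∑ s ∈ F, (A s).indicator (fun _ => m) ω) μ :=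
    integrable_finset_sum F hintind
  have hle := integral_mono hintsum hint hpoint
  rw [integral_finset_sum F hintind] at hle
  have hintval : ∀ s ∈ F, ∫ ω, (A s).indicator (fun _ => m) ω ∂μ = ε^2*(1-ε)^(n-2)*m := by
    intro s hs
    rw [integral_indicator_const m (hAmeas s), measureReal_def, hAreal s hs, smul_eq_mul]
  rw [Finset.sum_congr rfl hintval, Finset.sum_const, hcardF, nsmul_eq_mul] at hle
  calc (n.choose 2 : ℝ) * ε ^ 2 * (1 - ε) ^ (n - 2) * m
      = (n.choose 2 : ℝ) * (ε^2*(1-ε)^(n-2)*m) := by ring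
    _ ≤ ∫ ω, X ω ∂μ := hle
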